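/- Let π be a probability measure on a measurable space E, S : E → E a π-preserving measurable involution, Q a Markov kernel on E admitting a density q(x,y) with respect to a reference measure μ with π ≪ μ having density p, and define the generalized Metropolis–Hastings kernel: from x propose y ∼ Q(x,·), accept with probability α(x,y) = min(1, p(y)q(S(y),S(x)) / (p(x)q(x,y))) (set α = 1 when the denominator vanishes), moving to y on acceptance and to S(x) on rejection. Then the resulting kernel P leaves π invariant. -/

import Mathlib

open MeasureTheory

theorem generalized_metropolis_hastings_invariant
    {E : Type*} [MeasurableSpace E] (μ : Measure E) [SigmaFinite μ]
    (p : E → ℝ) (hp : ∀ x, 0 ≤ p x) (hpmeas : Measurable p)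
    (π : Measure E) [IsProbabilityMeasure π]
    (hπ : π = μ.withDensity (fun x => ENNReal.ofReal (p x)))
    (S : E → E) (hSmeas : Measurable S) (hSinv : ∀ x, S (S x) = x)
    (hSμ : Measure.map S μ = μ) (hpS : ∀ x, p (S x) = p x)
    (q : E → E → ℝ) (hq : ∀ x y, 0 ≤ q x y)
    (hqmeas : Measurable fun z : E × E => q z.1 z.2)
    (hqmarkov : ∀ x, ∫⁻ y, ENNReal.ofReal (q x y) ∂μ = 1)
    (α : E → E → ℝ)
    (hα : ∀ x y, α x y =
      if p x * q x y = 0 then 1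
      else min 1 (p y * q (S y) (S x) / (p x * q x y)))
    (P : E → Set E → ENNReal)
    (hP : ∀ x B, P x B =
      (∫⁻ y in B, ENNReal.ofReal (q x y * α x y) ∂μ) +
      B.indicator
        (fun _ => 1 - ∫⁻ y, ENNReal.ofReal (q x y * α x y) ∂μ) (S x)) :
    ∀ B : Set E, MeasurableSet B → ∫⁻ x, P x B ∂π = π B := by
  intro B hB
  have hmono : Monotone ENNReal.ofReal := fun _ _ h => ENNReal.ofReal_le_ofReal h
  -- notation
  set pe : E → ENNReal := fun x => ENNReal.ofReal (p x) with hpe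
  set m : E → E → ENNReal := fun x y =>
    min (pe x * ENNReal.ofReal (q x y)) (pe y * ENNReal.ofReal (q (S y) (S x))) with hm
  set w : E → E → ENNReal := fun x y => ENNReal.ofReal (q x y * α x y) with hw
  -- basic facts about α
  have hα1 : ∀ x y, α x y ≤ 1 := by
    intro x y; rw [hα]
    split
    · exact le_refl 1
    · exact min_le_left _ _
  -- key real identity
  have hreal : ∀ x y, p x * (q x y * α x y) = min (p x * q x y) (p y * q (S y) (S x)) := by
    intro x y
    rw [hα]
    split_ifs with h0
    · rw [mul_one, h0]
      exact (min_eq_left (mul_nonneg (hp y) (hq _ _))).symm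
    · rw [← mul_assoc, mul_min_of_nonneg _ _ (mul_nonneg (hp x) (hq x y)), mul_one,
        ← mul_div_assoc, mul_div_cancel_left₀ _ h0]
  -- key ENNReal identity
  have hkey : ∀ x y, pe x * w x y = m x y := by
    intro x y
    rw [hpe, hw, hm]
    simp only
    rw [← ENNReal.ofReal_mul (hp x), hreal x y, hmono.map_min,
      ENNReal.ofReal_mul (hp x), ENNReal.ofReal_mul (hp y)]
  -- measurability
  have hαmeas : Measurable fun z : E × E => α z.1 z.2 := by
    have : (fun z : E × E => α z.1 z.2) = fun z : E × E =>
        if p z.1 * q z.1 z.2 = 0 then 1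
        else min 1 (p z.2 * q (S z.2) (S z.1) / (p z.1 * q z.1 z.2)) :=
      funext fun z => hα z.1 z.2
    rw [this]
    have h1 : Measurable fun z : E × E => p z.1 * q z.1 z.2 :=
      (hpmeas.comp measurable_fst).mul hqmeas
    have h2 : Measurable fun z : E × E => q (S z.2) (S z.1) :=
      hqmeas.comp ((hSmeas.comp measurable_snd).prodMk (hSmeas.comp measurable_fst))
    exact Measurable.ite (h1 (measurableSet_singleton 0)) measurable_const
      (measurable_const.min (((hpmeas.comp measurable_snd).mul h2).div h1))
  have hwmeas : Measurable fun z : E × E => w z.1 z.2 :=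
    (hqmeas.mul hαmeas).ennreal_ofReal
  have hmmeas : Measurable fun z : E × E => m z.1 z.2 := by
    apply Measurable.min
    · exact ((hpmeas.comp measurable_fst).ennreal_ofReal).mul hqmeas.ennreal_ofReal
    · exact ((hpmeas.comp measurable_snd).ennreal_ofReal).mul
        ((hqmeas.comp ((hSmeas.comp measurable_snd).prodMk
          (hSmeas.comp measurable_fst))).ennreal_ofReal)
  -- the rejection probability
  set k : E → ENNReal := fun x => ∫⁻ y, w x y ∂μ with hk
  have hkmeas : Measurable k := hwmeas.lintegral_prod_right'
  have hk1 : ∀ x, k x ≤ 1 := by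
    intro x
    rw [hk, ← hqmarkov x]
    exact lintegral_mono fun y => ENNReal.ofReal_le_ofReal
      (mul_le_of_le_one_right (hq x y) (hα1 x y))
  -- integrated acceptance quantities
  set g : E → ENNReal := fun x => ∫⁻ y, m x y ∂μ with hgdef
  set h : E → ENNReal := fun x => ∫⁻ y, m y x ∂μ with hhdef
  have hgmeas : Measurable g := hmmeas.lintegral_prod_right'
  have hhmeas : Measurable h := by
    have : Measurable fun z : E × E => m z.2 z.1 := hmmeas.comp measurable_swap
    exact this.lintegral_prod_right'
  have hpek : ∀ x, pe x * k x = g x := by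
    intro x
    rw [hk, hgdef, ← lintegral_const_mul' _ _ ENNReal.ofReal_ne_top]
    exact lintegral_congr fun y => hkey x y
  -- change of variables identities
  have hlift : ∀ f : E → ENNReal, Measurable f → ∫⁻ x, f (S x) ∂μ = ∫⁻ x, f x ∂μ := by
    intro f hf
    conv_rhs => rw [← hSμ]
    rw [lintegral_map hf hSmeas]
  have hmSS : ∀ x y, m (S x) (S y) = m y x := by
    intro x y
    rw [hm]
    simp only [hSinv]
    rw [min_comm]
    congr 2 <;> simp [hpe, hpS]
  have hgh : ∀ x, g x = h (S x) := by
    intro x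
    have hfmeas : Measurable fun y => m y (S x) :=
      hmmeas.comp (measurable_id.prodMk measurable_const)
    have h2 := hlift (fun y => m y (S x)) hfmeas
    rw [hhdef]
    simp only
    rw [← h2]
    exact lintegral_congr fun y => (hmSS y x).symm
  -- h x ≤ pe x
  have hh_le : ∀ x, h x ≤ pe x := by
    intro x
    have step1 : h x ≤ ∫⁻ y, pe x * ENNReal.ofReal (q (S x) (S y)) ∂μ :=
      lintegral_mono fun y => min_le_right _ _
    have step2 : ∫⁻ y, pe x * ENNReal.ofReal (q (S x) (S y)) ∂μ = pe x := by
      rw [lintegral_const_mul' _ _ ENNReal.ofReal_ne_top,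
        hlift (fun y => ENNReal.ofReal (q (S x) y))
          ((hqmeas.comp ((measurable_const (a := S x)).prodMk measurable_id)).ennreal_ofReal),
        hqmarkov, mul_one]
    exact step1.trans step2.le
  -- rewrite the kernel pointwise after multiplying by the density
  have hpoint : ∀ x, pe x * P x B =
      (∫⁻ y in B, m x y ∂μ) + (S ⁻¹' B).indicator (fun x => pe x - g x) x := by
    intro x
    rw [hP x B, mul_add]
    congr 1
    · rw [← lintegral_const_mul' _ _ ENNReal.ofReal_ne_top]
      exact lintegral_congr fun y => hkey x y
    · by_cases hx : S x ∈ B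
      · rw [Set.indicator_of_mem hx, Set.indicator_of_mem (by exact hx)]
        rw [ENNReal.mul_sub (fun _ _ => ENNReal.ofReal_ne_top), mul_one, hpek]
      · rw [Set.indicator_of_notMem hx, Set.indicator_of_notMem (by exact hx), mul_zero]
  -- measurability of the two parts
  have hApart_meas : Measurable fun x => ∫⁻ y in B, m x y ∂μ := by
    have : Measurable fun z : E × E => m z.1 z.2 := hmmeas
    exact Measurable.lintegral_prod_right' (ν := μ.restrict B) this
  have hRpart_meas : Measurable fun x => (S ⁻¹' B).indicator (fun x => pe x - g x) x :=
    ((hpmeas.ennreal_ofReal).sub hgmeas).indicator (hSmeas hB)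
  -- main computation
  have hPmeas : Measurable fun x => P x B := by
    have : (fun x => P x B) = fun x =>
          (∫⁻ y in B, w x y ∂μ) +
            (S ⁻¹' B).indicator (fun x => 1 - k x) x := by
        funext x
        rw [hP x B]
        have hind : B.indicator (fun _ => 1 - k x) (S x)
            = (S ⁻¹' B).indicator (fun x => 1 - k x) x := by
          by_cases hx : S x ∈ B <;> simp [Set.indicator_apply, hx]
        rw [← hind]
    rw [this]
    exact (Measurable.lintegral_prod_right' (ν := μ.restrict B) hwmeas).add
      (((measurable_const).sub hkmeas).indicator (hSmeas hB))
  have hstart : ∫⁻ x, P x B ∂π = ∫⁻ x, pe x * P x B ∂μ := by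
    rw [hπ, lintegral_withDensity_eq_lintegral_mul μ hpmeas.ennreal_ofReal hPmeas]
    rfl
  have hA : ∫⁻ x, (∫⁻ y in B, m x y ∂μ) ∂μ = ∫⁻ x, B.indicator h x ∂μ := by
    have h1 : ∀ x, ∫⁻ y in B, m x y ∂μ = ∫⁻ y, B.indicator (m x) y ∂μ := by
      intro x
      rw [lintegral_indicator hB]
    simp_rw [h1]
    rw [lintegral_lintegral_swap]
    · apply lintegral_congr
      intro y
      by_cases hy : y ∈ B
      · rw [Set.indicator_of_mem hy]
        simp_rw [Set.indicator_of_mem hy]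
        rfl
      · rw [Set.indicator_of_notMem hy]
        simp_rw [Set.indicator_of_notMem hy]
        exact lintegral_zero
    · have : (Function.uncurry fun x y => B.indicator (m x) y) =
          (Prod.snd ⁻¹' B).indicator fun z : E × E => m z.1 z.2 := by
        funext z
        by_cases hz : z.2 ∈ B
        · simp [Function.uncurry, Set.indicator_of_mem hz,
            Set.indicator_of_mem (show z ∈ Prod.snd ⁻¹' B from hz)]
        · simp [Function.uncurry, Set.indicator_of_notMem hz,
            Set.indicator_of_notMem (show z ∉ Prod.snd ⁻¹' B from hz)]
      rw [this]
      exact (hmmeas.indicator (measurable_snd hB)).aemeasurable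
  have hR : ∫⁻ x, (S ⁻¹' B).indicator (fun x => pe x - g x) x ∂μ
      = ∫⁻ x, B.indicator (fun x => pe x - h x) x ∂μ := by
    have h1 : ∀ x, (S ⁻¹' B).indicator (fun x => pe x - g x) x
        = B.indicator (fun x => pe x - h x) (S x) := by
      intro x
      by_cases hx : S x ∈ B
      · rw [Set.indicator_of_mem (by exact hx), Set.indicator_of_mem hx]
        rw [hgh x]
        congr 1
        rw [hpe]; simp only; rw [hpS]
      · rw [Set.indicator_of_notMem (by exact hx), Set.indicator_of_notMem hx]
    simp_rw [h1]
    exact hlift _ (((hpmeas.ennreal_ofReal).sub hhmeas).indicator hB)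
  calc ∫⁻ x, P x B ∂π = ∫⁻ x, pe x * P x B ∂μ := hstart
    _ = ∫⁻ x, ((∫⁻ y in B, m x y ∂μ) + (S ⁻¹' B).indicator (fun x => pe x - g x) x) ∂μ :=
        lintegral_congr hpoint
    _ = (∫⁻ x, (∫⁻ y in B, m x y ∂μ) ∂μ)
        + ∫⁻ x, (S ⁻¹' B).indicator (fun x => pe x - g x) x ∂μ :=
        lintegral_add_left hApart_meas _
    _ = (∫⁻ x, B.indicator h x ∂μ) + ∫⁻ x, B.indicator (fun x => pe x - h x) x ∂μ := by
        rw [hA, hR]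
    _ = ∫⁻ x, (B.indicator h x + B.indicator (fun x => pe x - h x) x) ∂μ :=
        (lintegral_add_left (hhmeas.indicator hB) _).symm
    _ = ∫⁻ x, B.indicator pe x ∂μ := by
        apply lintegral_congr
        intro x
        by_cases hx : x ∈ B
        · simp only [Set.indicator_of_mem hx]
          exact add_tsub_cancel_of_le (hh_le x)
        · simp [Set.indicator_of_notMem hx]
    _ = π B := by
        rw [lintegral_indicator hB, hπ, withDensity_apply _ hB]
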